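/- Let (V, L, s, t) be a lattice, T ⊆ L a spanning tree, v₀ ∈ V a fixed root, and A an additive commutative group. Then the map Φ : (L → A) → ({ℓ : L // ℓ ∉ T} → A) × ({v : V // v ≠ v₀} → A) given by Φ k = (the restriction of k to L ∖ T, the restriction of ∇ k to V ∖ {v₀}) is a bijection, and indeed an isomorphism of additive groups. (This is the trivialization of the Gauss law bundle: for each choice of electric data on the non-tree links and each vertex charge configuration away from the root, there is a unique compatible electric configuration on the tree links.) -/
import Mathlib


open Finset

/-- The divergence map of a lattice. -/
def divergence {V L : Type*} [Fintype L] [DecidableEq V] {A : Type*} [AddCommGroup A]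
    (s t : L → V) (k : L → A) : V → A :=
  fun v => (∑ ℓ ∈ univ.filter fun ℓ => s ℓ = v, k ℓ) -
    ∑ ℓ ∈ univ.filter fun ℓ => t ℓ = v, k ℓ

/-- The simple graph on the vertices of a lattice. -/
def latticeGraph {V L : Type*} (s t : L → V) : SimpleGraph V :=
  SimpleGraph.fromRel fun v w => ∃ ℓ, s ℓ = v ∧ t ℓ = w

/-- `T` is a spanning tree of the lattice `(V, L, s, t)`: it has `|V| - 1` links and the
lattice `(V, T)` is connected. -/
def IsSpanningTree {V L : Type*} [Fintype V] (s t : L → V) (T : Finset L) : Prop :=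
  T.card = Fintype.card V - 1 ∧ Nonempty V ∧
    (latticeGraph (fun ℓ : {x // x ∈ T} => s ℓ.1) fun ℓ : {x // x ∈ T} => t ℓ.1).Connected

/-- The trivialization map of the Gauss law bundle associated with a spanning tree `T` and
root `v₀`: it records the electric data on the non-tree links and the vertex charges away
from the root. -/
def treeTrivialization {V L : Type*} [Fintype L] [DecidableEq V]
    (s t : L → V) (T : Finset L) (v₀ : V) (A : Type*) [AddCommGroup A] :
    (L → A) → ({ℓ : L // ℓ ∉ T} → A) × ({v : V // v ≠ v₀} → A) :=
  fun k => (fun ℓ => k ℓ.1, fun v => divergence s t k v.1)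

section Aux
variable {V L : Type*} [Fintype L] [DecidableEq V] {A : Type*} [AddCommGroup A] (s t : L → V)

lemma divergence_add (k₁ k₂ : L → A) :
    divergence s t (k₁ + k₂) = divergence s t k₁ + divergence s t k₂ := by
  funext v
  simp only [divergence, Pi.add_apply, Finset.sum_add_distrib]
  abel

lemma divergence_zsmul (P : L → ℤ) (c : A) (v : V) :
    divergence s t (fun ℓ => P ℓ • c) v = (divergence s t P v) • c := by
  simp [divergence, sub_smul, Finset.sum_smul]

lemma divergence_sum {ι : Type*} (u : Finset ι) (f : ι → L → A) (v : V) :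
    divergence s t (fun ℓ => ∑ i ∈ u, f i ℓ) v = ∑ i ∈ u, divergence s t (f i) v := by
  simp only [divergence]
  rw [Finset.sum_sub_distrib]
  congr 1 <;> exact Finset.sum_comm

lemma divergence_single [DecidableEq L] (ℓ₀ : L) (c : A) (v : V) :
    divergence s t (fun ℓ => if ℓ = ℓ₀ then c else 0) v =
      (if v = s ℓ₀ then c else 0) - (if v = t ℓ₀ then c else 0) := by
  simp [divergence, Finset.sum_ite_eq', eq_comm]

lemma exists_flow (T : Finset L)
    (hconn : (latticeGraph (fun ℓ : {x // x ∈ T} => s ℓ.1)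
        fun ℓ : {x // x ∈ T} => t ℓ.1).Connected)
    (v w : V) :
    ∃ P : L → ℤ, (∀ ℓ, ℓ ∉ T → P ℓ = 0) ∧
      ∀ u, divergence s t P u = (if u = v then 1 else 0) - (if u = w then 1 else 0) := by
  classical
  obtain ⟨p⟩ := hconn.preconnected v w
  induction p with
  | nil => exact ⟨0, fun _ _ => rfl, fun u => by simp [divergence]⟩
  | @cons a b c hab p ih =>
    obtain ⟨P, hP0, hPd⟩ := ih
    rw [latticeGraph, SimpleGraph.fromRel_adj] at hab
    obtain ⟨hne, h⟩ := hab
    rcases h with ⟨ℓ, hs, ht⟩ | ⟨ℓ, hs, ht⟩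
    · refine ⟨(fun ℓ' => if ℓ' = ℓ.1 then 1 else 0) + P, fun ℓ' h' => ?_, fun u => ?_⟩
      · have : ℓ' ≠ ℓ.1 := fun he => h' (he ▸ ℓ.2)
        simp [this, hP0 ℓ' h']
      · rw [divergence_add, Pi.add_apply, divergence_single, hPd, hs, ht]
        clear hconn p hP0
        split_ifs <;> omega
    · refine ⟨(fun ℓ' => if ℓ' = ℓ.1 then (-1 : ℤ) else 0) + P, fun ℓ' h' => ?_, fun u => ?_⟩
      · have : ℓ' ≠ ℓ.1 := fun he => h' (he ▸ ℓ.2)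
        simp [this, hP0 ℓ' h']
      · rw [divergence_add, Pi.add_apply, divergence_single, hPd, hs, ht]
        clear hconn p hP0
        split_ifs <;> omega

end Aux



lemma treeTriv_surjective {V L : Type*} [Fintype V] [Fintype L] [DecidableEq V]
    (s t : L → V) (T : Finset L) (hT : IsSpanningTree s t T) (v₀ : V)
    (A : Type*) [AddCommGroup A] :
    Function.Surjective (treeTrivialization s t T v₀ A) := by
  classical
  choose P hP0 hPd using fun v => exists_flow s t T hT.2.2 v v₀
  rintro ⟨a, b⟩
  set a' : L → A := fun ℓ => if h : ℓ ∈ T then 0 else a ⟨ℓ, h⟩ with ha'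
  set c : {v : V // v ≠ v₀} → A := fun v => b v - divergence s t a' v.1 with hc
  refine ⟨a' + fun ℓ => ∑ v : {v : V // v ≠ v₀}, (P v.1 ℓ) • c v, ?_⟩
  unfold treeTrivialization
  refine Prod.ext ?_ ?_
  · funext ℓ'
    have h1 : a' ℓ'.1 = a ℓ' := dif_neg ℓ'.2
    have h2 : ∀ v : {v : V // v ≠ v₀}, (P v.1 ℓ'.1) • c v = 0 := by
      intro v; rw [hP0 v.1 ℓ'.1 ℓ'.2, zero_smul]
    simp only [Pi.add_apply, h1, Finset.sum_congr rfl (fun v _ => h2 v),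
      Finset.sum_const_zero, add_zero]
  · funext v'
    dsimp only
    rw [divergence_add, Pi.add_apply, divergence_sum]
    have h3 : ∀ v : {v : V // v ≠ v₀},
        divergence s t (fun ℓ => (P v.1 ℓ) • c v) v'.1 =
          (if v'.1 = v.1 then (1:ℤ) else 0) • c v := by
      intro v
      rw [divergence_zsmul, hPd v.1 v'.1]
      have : (if v'.1 = v₀ then (1:ℤ) else 0) = 0 := if_neg v'.2
      rw [this, sub_zero]
    rw [Finset.sum_congr rfl (fun v _ => h3 v)]
    rw [Finset.sum_eq_single v' (fun v _ hv => by
        rw [if_neg (fun h => hv (Subtype.ext h.symm)), zero_smul])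
      (fun h => absurd (Finset.mem_univ v') h)]
    rw [if_pos rfl, one_smul, hc]
    dsimp only
    rw [add_comm, sub_add_cancel]

lemma bij_of_int_matrix_surj {J : Type*} [Fintype J] [DecidableEq J] (M : Matrix J J ℤ)
    (hsurj : Function.Surjective fun (k : J → ℤ) (i : J) => ∑ j, M i j • k j)
    (A : Type*) [AddCommGroup A] :
    Function.Bijective fun (k : J → A) (i : J) => ∑ j, M i j • k j := by
  have hU : IsUnit M := by
    rw [← Matrix.mulVec_surjective_iff_isUnit]
    have : M.mulVec = fun (k : J → ℤ) (i : J) => ∑ j, M i j • k j := by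
      funext k i
      simp [Matrix.mulVec, dotProduct, smul_eq_mul]
    rw [this]; exact hsurj
  have hdet : IsUnit M.det := (Matrix.isUnit_iff_isUnit_det M).mp hU
  have hNM : M⁻¹ * M = 1 := Matrix.nonsing_inv_mul M hdet
  have hMN : M * M⁻¹ = 1 := Matrix.mul_nonsing_inv M hdet
  have key : ∀ (N' M' : Matrix J J ℤ), N' * M' = 1 → ∀ (k : J → A) (j : J),
      (∑ i, N' j i • ∑ l, M' i l • k l) = k j := by
    intro N' M' h k j
    have h1 : ∀ i, N' j i • ∑ l, M' i l • k l = ∑ l, (N' j i * M' i l) • k l := by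
      intro i; rw [Finset.smul_sum]; simp_rw [smul_smul]
    simp_rw [h1]
    rw [Finset.sum_comm]
    have h2 : ∀ l, (∑ i, (N' j i * M' i l) • k l) = ((N' * M') j l) • k l := by
      intro l; rw [← Finset.sum_smul, Matrix.mul_apply]
    simp_rw [h2, h, Matrix.one_apply]
    simp
  constructor
  · intro k₁ k₂ hk
    funext j
    rw [← key M⁻¹ M hNM k₁ j, ← key M⁻¹ M hNM k₂ j]
    congr 1
    ext i
    congr 1
    exact congrFun hk i
  · intro c
    refine ⟨fun j => ∑ i, M⁻¹ j i • c i, ?_⟩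
    funext i
    exact key M M⁻¹ hMN c i

def gaussRow {V L : Type*} [DecidableEq V] [DecidableEq L] (s t : L → V)
    (T : Finset L) (v₀ : V) : ({ℓ : L // ℓ ∉ T} ⊕ {v : V // v ≠ v₀}) → L → ℤ :=
  Sum.elim (fun ℓ' ℓ => if ℓ = ℓ'.1 then 1 else 0)
    (fun v' ℓ => (if s ℓ = v'.1 then 1 else 0) - (if t ℓ = v'.1 then 1 else 0))

lemma gaussRow_eval {V L : Type*} [Fintype L] [DecidableEq V] [DecidableEq L]
    (s t : L → V) (T : Finset L) (v₀ : V) {A : Type*} [AddCommGroup A] (k : L → A)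
    (i : {ℓ : L // ℓ ∉ T} ⊕ {v : V // v ≠ v₀}) :
    ∑ ℓ, gaussRow s t T v₀ i ℓ • k ℓ =
      Sum.elim (fun ℓ' : {ℓ : L // ℓ ∉ T} => k ℓ'.1)
        (fun v' : {v : V // v ≠ v₀} => divergence s t k v'.1) i := by
  rcases i with ℓ' | v'
  · simp [gaussRow, ite_smul]
  · simp only [gaussRow, Sum.elim_inr, sub_smul, Finset.sum_sub_distrib, ite_smul,
      one_smul, zero_smul, divergence, ← Finset.sum_filter]

/-- Trivialization of the Gauss law bundle: given a spanning tree `T` with root `v₀`, the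
map sending an electric configuration `k` to (its restriction to the non-tree links, the
restriction of `∇ k` away from the root) is a bijection, and indeed an isomorphism of
additive groups. -/
theorem treeTrivialization_bijective_and_additive
    {V L : Type*} [Fintype V] [Fintype L] [DecidableEq V]
    (s t : L → V) (T : Finset L) (hT : IsSpanningTree s t T) (v₀ : V)
    (A : Type*) [AddCommGroup A] :
    Function.Bijective (treeTrivialization s t T v₀ A) ∧
      ∀ k₁ k₂ : L → A,
        treeTrivialization s t T v₀ A (k₁ + k₂) =
          treeTrivialization s t T v₀ A k₁ + treeTrivialization s t T v₀ A k₂ := by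
  classical
  have hcardI : Fintype.card ({ℓ : L // ℓ ∉ T} ⊕ {v : V // v ≠ v₀}) = Fintype.card L := by
    have h1 : Fintype.card {ℓ : L // ℓ ∉ T} = Fintype.card L - T.card := by
      simp [Fintype.card_subtype_compl, Fintype.card_coe]
    have h2 : Fintype.card {v : V // v ≠ v₀} = Fintype.card V - 1 := by
      simp [Fintype.card_subtype_compl, Fintype.card_subtype_eq]
    have h3 : T.card ≤ Fintype.card L := by
      simpa using Finset.card_le_card (Finset.subset_univ T)
    rw [Fintype.card_sum, h1, h2, ← hT.1]
    omega
  set ε : L ≃ ({ℓ : L // ℓ ∉ T} ⊕ {v : V // v ≠ v₀}) := Fintype.equivOfCardEq hcardI.symm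
    with hε
  set M : Matrix L L ℤ := Matrix.of fun j ℓ => gaussRow s t T v₀ (ε j) ℓ with hM
  have hMsum : ∀ (B : Type _) [AddCommGroup B], ∀ (k : L → B) (j : L),
      ∑ ℓ, M j ℓ • k ℓ =
        Sum.elim (fun ℓ' : {ℓ : L // ℓ ∉ T} => k ℓ'.1)
          (fun v' : {v : V // v ≠ v₀} => divergence s t k v'.1) (ε j) := by
    intro B _ k j
    exact gaussRow_eval s t T v₀ k (ε j)
  have hFsurj : Function.Surjective fun (k : L → ℤ) (j : L) => ∑ ℓ, M j ℓ • k ℓ := by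
    intro c
    obtain ⟨k, hk⟩ := treeTriv_surjective s t T hT v₀ ℤ
      (fun ℓ' => c (ε.symm (Sum.inl ℓ')), fun v' => c (ε.symm (Sum.inr v')))
    refine ⟨k, funext fun j => ?_⟩
    have h1 := congrFun (congrArg Prod.fst hk)
    have h2 := congrFun (congrArg Prod.snd hk)
    simp only [treeTrivialization] at h1 h2
    dsimp only
    rw [hMsum]
    rcases h : ε j with ℓ' | v'
    · rw [Sum.elim_inl, h1 ℓ']
      have : ε.symm (Sum.inl ℓ') = j := by rw [← h, Equiv.symm_apply_apply]
      rw [this]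
    · rw [Sum.elim_inr, h2 v']
      have : ε.symm (Sum.inr v') = j := by rw [← h, Equiv.symm_apply_apply]
      rw [this]
  have hbij := bij_of_int_matrix_surj M hFsurj A
  refine ⟨⟨?_, treeTriv_surjective s t T hT v₀ A⟩, ?_⟩
  · intro k₁ k₂ hk
    apply hbij.1
    funext j
    have h1 := congrFun (congrArg Prod.fst hk)
    have h2 := congrFun (congrArg Prod.snd hk)
    simp only [treeTrivialization] at h1 h2
    show ∑ ℓ, M j ℓ • k₁ ℓ = ∑ ℓ, M j ℓ • k₂ ℓ
    simp only [hM, Matrix.of_apply]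
    rw [gaussRow_eval s t T v₀ k₁ (ε j), gaussRow_eval s t T v₀ k₂ (ε j)]
    rcases ε j with ℓ' | v'
    · exact h1 ℓ'
    · exact h2 v'
  · intro k₁ k₂
    refine Prod.ext ?_ ?_
    · funext ℓ'; simp [treeTrivialization]
    · funext v'
      simp [treeTrivialization, divergence_add]
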